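/- Let p > 1, a₊, a₋ > 0, γ ∈ ℝ \ {-1}, and define I₁(ρ) = ∫_{a₊(ρ+1)/(a₊+a₋)}^{1} |a₊ - a₊ξ|^{-1/p} |ξ|^{-γ/(γ+1)} dξ and I₂(ρ) = ∫_{a₊/a₋}^{(a₊/(a₊+a₋))(ρ+1)/ρ} |a₋ξ - a₊|^{-1/p} |ξ|^{-γ/(γ+1)} dξ. Then on the interval of definition I₂'(ρ) = ρ^{-2 + γ/(γ+1) + 1/p} · I₁'(ρ). -/

import Mathlib

open Set MeasureTheory intervalIntegral

-- continuity of the integrand away from singularities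
lemma contAt_integrand (a b e₁ e₂ x : ℝ) (h1 : a - b * x ≠ 0) (h2 : x ≠ 0) :
    ContinuousAt (fun ξ : ℝ => |a - b * ξ| ^ e₁ * |ξ| ^ e₂) x := by
  have c1 : ContinuousAt (fun ξ : ℝ => |a - b * ξ|) x :=
    (continuous_abs.comp (by continuity)).continuousAt
  have c2 : ContinuousAt (fun ξ : ℝ => |ξ|) x := continuous_abs.continuousAt
  exact (c1.rpow_const (Or.inl (abs_ne_zero.mpr h1))).mul
    (c2.rpow_const (Or.inl (abs_ne_zero.mpr h2)))

lemma meas_integrand (a b e₁ e₂ : ℝ) :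
    Measurable (fun ξ : ℝ => |a - b * ξ| ^ e₁ * |ξ| ^ e₂) := by
  fun_prop

theorem stmt_15 (p ap am γ : ℝ) (hp : 1 < p) (hap : 0 < ap) (ham : 0 < am)
    (hγ : γ ≠ -1)
    (I₁ I₂ : ℝ → ℝ)
    (hI₁ : ∀ ρ : ℝ, I₁ ρ =
      ∫ ξ in (ap * (ρ + 1) / (ap + am))..1,
        |ap - ap * ξ| ^ (-(1 / p)) * |ξ| ^ (-(γ / (γ + 1))))
    (hI₂ : ∀ ρ : ℝ, I₂ ρ =
      ∫ ξ in (ap / am)..(ap / (ap + am) * ((ρ + 1) / ρ)),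
        |am * ξ - ap| ^ (-(1 / p)) * |ξ| ^ (-(γ / (γ + 1))))
    (ρ : ℝ)
    (hρ : (-1 < γ ∧ ρ ∈ Ioo 0 (am / ap)) ∨ (γ < -1 ∧ ρ ∈ Ioi (am / ap)))
    (hint₁ : ∀ s : ℝ,
      ((-1 < γ ∧ s ∈ Ioo 0 (am / ap)) ∨ (γ < -1 ∧ s ∈ Ioi (am / ap))) →
      IntervalIntegrable
        (fun ξ : ℝ => |ap - ap * ξ| ^ (-(1 / p)) * |ξ| ^ (-(γ / (γ + 1))))
        volume (ap * (s + 1) / (ap + am)) 1)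
    (hint₂ : ∀ s : ℝ,
      ((-1 < γ ∧ s ∈ Ioo 0 (am / ap)) ∨ (γ < -1 ∧ s ∈ Ioi (am / ap))) →
      IntervalIntegrable
        (fun ξ : ℝ => |am * ξ - ap| ^ (-(1 / p)) * |ξ| ^ (-(γ / (γ + 1))))
        volume (ap / am) (ap / (ap + am) * ((s + 1) / s))) :
    deriv I₂ ρ = ρ ^ (-2 + γ / (γ + 1) + 1 / p) * deriv I₁ ρ := by
  have hS : 0 < ap + am := by linarith
  -- basic facts about ρ
  have hρpos : 0 < ρ := by
    rcases hρ with ⟨_, h⟩ | ⟨_, h⟩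
    · exact h.1
    · exact lt_trans (div_pos ham hap) h
  have hne : am - ap * ρ ≠ 0 := by
    rcases hρ with ⟨_, h⟩ | ⟨_, h⟩
    · have : ρ < am / ap := h.2
      have : ap * ρ < am := by rwa [lt_div_iff₀ hap, mul_comm] at this
      linarith
    · have : am / ap < ρ := h
      have : am < ap * ρ := by rwa [div_lt_iff₀ hap, mul_comm] at this
      linarith
  set e₁ : ℝ := -(1 / p) with he₁
  set e₂ : ℝ := -(γ / (γ + 1)) with he₂
  set f₁ : ℝ → ℝ := fun ξ => |ap - ap * ξ| ^ e₁ * |ξ| ^ e₂ with hf₁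
  set f₂ : ℝ → ℝ := fun ξ => |am * ξ - ap| ^ e₁ * |ξ| ^ e₂ with hf₂
  set c₁ : ℝ → ℝ := fun s => ap * (s + 1) / (ap + am) with hc₁
  set c₂ : ℝ → ℝ := fun s => ap / (ap + am) * ((s + 1) / s) with hc₂
  have hc₁pos : 0 < c₁ ρ := by
    have : 0 < ρ + 1 := by linarith
    exact div_pos (mul_pos hap this) hS
  have hA : ap - ap * c₁ ρ = ap * (am - ap * ρ) / (ap + am) := by
    simp only [hc₁]; field_simp [hS.ne']; ring
  have hAne : ap - ap * c₁ ρ ≠ 0 := by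
    rw [hA]
    exact div_ne_zero (mul_ne_zero hap.ne' hne) hS.ne'
  have hc₂eq : c₂ ρ = c₁ ρ / ρ := by
    simp only [hc₁, hc₂]; field_simp [hS.ne', hρpos.ne']; try ring
  have hc₂pos : 0 < c₂ ρ := by rw [hc₂eq]; exact div_pos hc₁pos hρpos
  have hB : am * c₂ ρ - ap = (ap - ap * c₁ ρ) / ρ := by
    simp only [hc₁, hc₂]; field_simp [hS.ne', hρpos.ne']; try ring
  have hBne : am * c₂ ρ - ap ≠ 0 := by
    rw [hB]; exact div_ne_zero hAne hρpos.ne'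
  -- derivative of I₁
  have hd1 : HasDerivAt (fun u => ∫ x in (1:ℝ)..u, f₁ x) (f₁ (c₁ ρ)) (c₁ ρ) := by
    apply intervalIntegral.integral_hasDerivAt_right ((hint₁ ρ hρ).symm)
    · exact (meas_integrand ap ap e₁ e₂).stronglyMeasurable.stronglyMeasurableAtFilter
    · exact contAt_integrand ap ap e₁ e₂ _ hAne hc₁pos.ne'
  have hdc₁ : HasDerivAt c₁ (ap / (ap + am)) ρ := by
    have : HasDerivAt (fun s : ℝ => ap * (s + 1) / (ap + am)) (ap * 1 / (ap + am)) ρ :=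
      (((hasDerivAt_id ρ).add_const 1).const_mul ap).div_const (ap + am)
    simpa using this
  have hD1 : HasDerivAt I₁ (-(f₁ (c₁ ρ) * (ap / (ap + am)))) ρ := by
    have hcomp := (hd1.comp ρ hdc₁).neg
    have : I₁ = fun s => -(∫ x in (1:ℝ)..(c₁ s), f₁ x) := by
      funext s
      rw [hI₁ s, intervalIntegral.integral_symm]
    rw [this]
    exact hcomp
  -- derivative of I₂
  have hf₂eq : f₂ = fun ξ => |ap - am * ξ| ^ e₁ * |ξ| ^ e₂ := by
    funext ξ; rw [hf₂]; rw [abs_sub_comm]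
  have hd2 : HasDerivAt (fun u => ∫ x in (ap/am)..u, f₂ x) (f₂ (c₂ ρ)) (c₂ ρ) := by
    apply intervalIntegral.integral_hasDerivAt_right (hint₂ ρ hρ)
    · rw [hf₂eq]
      exact (meas_integrand ap am e₁ e₂).stronglyMeasurable.stronglyMeasurableAtFilter
    · rw [hf₂eq]
      refine contAt_integrand ap am e₁ e₂ _ ?_ hc₂pos.ne'
      intro h; apply hBne; simp only [hc₂]; linarith
  have hdc₂ : HasDerivAt c₂ (ap / (ap + am) * (-1 / ρ ^ 2)) ρ := by
    have h0 : HasDerivAt (fun s : ℝ => (s + 1) / s)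
        ((1 * ρ - (ρ + 1) * 1) / ρ ^ 2) ρ :=
      ((hasDerivAt_id ρ).add_const 1).div (hasDerivAt_id ρ) hρpos.ne'
    have h1 := h0.const_mul (ap / (ap + am))
    have : (1 * ρ - (ρ + 1) * 1) / ρ ^ 2 = -1 / ρ ^ 2 := by ring_nf
    rw [this] at h1
    exact h1
  have hD2 : HasDerivAt I₂ (f₂ (c₂ ρ) * (ap / (ap + am) * (-1 / ρ ^ 2))) ρ := by
    have hcomp := hd2.comp ρ hdc₂
    have : I₂ = fun s => ∫ x in (ap/am)..(c₂ s), f₂ x := by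
      funext s; rw [hI₂ s]
    rw [this]
    exact hcomp
  rw [hD1.deriv, hD2.deriv]
  -- algebra
  set A : ℝ := |ap - ap * c₁ ρ| with hAdef
  have hApos : 0 < A := abs_pos.mpr hAne
  have hBval : |c₁ ρ| = c₁ ρ := abs_of_pos hc₁pos
  have hf₂v : f₂ (c₂ ρ) = (A ^ e₁ * ρ ^ (1/p)) * ((c₁ ρ) ^ e₂ * ρ ^ (γ/(γ+1))) := by
    rw [hf₂]
    simp only
    rw [hB, hc₂eq]
    rw [abs_div, abs_div, abs_of_pos hρpos, ← hAdef, hBval,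
      Real.div_rpow hApos.le hρpos.le, Real.div_rpow hc₁pos.le hρpos.le,
      div_eq_mul_inv, div_eq_mul_inv, ← Real.rpow_neg hρpos.le, ← Real.rpow_neg hρpos.le,
      he₁, he₂, neg_neg, neg_neg]
  have hf₁v : f₁ (c₁ ρ) = A ^ e₁ * (c₁ ρ) ^ e₂ := by
    rw [hf₁]; simp only; rw [hBval]
  have hpow : ρ ^ (-2 + γ / (γ + 1) + 1 / p)
      = ρ ^ (γ/(γ+1)) * ρ ^ (1/p) * (ρ ^ 2)⁻¹ := by
    have h2 : (ρ ^ 2)⁻¹ = ρ ^ (-2 : ℝ) := by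
      rw [← Real.rpow_two, ← Real.rpow_neg hρpos.le]
    rw [h2, ← Real.rpow_add hρpos, ← Real.rpow_add hρpos]
    congr 1; ring
  rw [hf₂v, hf₁v, hpow]
  have hρ2 : (ρ : ℝ) ^ 2 ≠ 0 := pow_ne_zero 2 hρpos.ne'
  field_simp
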